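/- Let V₀ : (0,∞) → M₂(ℂ) be continuous, E₁, E₂ ∈ ℂ, and let u₁, u₂ : (0,∞) → M₂(ℂ) be twice differentiable invertible matrix solutions of −u_j'' + V₀u_j = E_j u_j. Set w₁ = u₁'u₁⁻¹, V₁ = V₀ − 2w₁', ũ₂ = w₁u₂ − u₂', assume ũ₂(r) is invertible for all r, and set w̃₂ = ũ₂'ũ₂⁻¹ and V₂ = V₁ − 2w̃₂'. Then for any k² ∈ ℂ and any twice differentiable function ψ with −ψ'' + V₀ψ = k²ψ, the function φ = (w̃₂ − ∂_r)((w₁ − ∂_r)ψ) satisfies −φ'' + V₂φ = k²φ for all r. -/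

import Mathlib

open Matrix Set


lemma entryMulDeriv {l m p : Type*} [Fintype m]
    (A : ℝ → Matrix l m ℂ) (Ad : Matrix l m ℂ)
    (B : ℝ → Matrix m p ℂ) (Bd : Matrix m p ℂ) (r : ℝ)
    (hA : ∀ i j, HasDerivAt (fun t => A t i j) (Ad i j) r)
    (hB : ∀ i j, HasDerivAt (fun t => B t i j) (Bd i j) r)
    (i : l) (j : p) :
    HasDerivAt (fun t => (A t * B t) i j) ((Ad * B r + A r * Bd) i j) r := by
  simp only [Matrix.mul_apply, Matrix.add_apply]
  rw [← Finset.sum_add_distrib]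
  exact HasDerivAt.fun_sum fun l _ => (hA i l).mul (hB l j)

lemma riccati {V u u' u'' w wd : ℝ → Matrix (Fin 2) (Fin 2) ℂ} {E : ℂ}
    (hu : ∀ r ∈ Ioi (0:ℝ), ∀ i j, HasDerivAt (fun t => u t i j) (u' r i j) r)
    (hu' : ∀ r ∈ Ioi (0:ℝ), ∀ i j, HasDerivAt (fun t => u' t i j) (u'' r i j) r)
    (hinv : ∀ r ∈ Ioi (0:ℝ), IsUnit (u r))
    (heq : ∀ r ∈ Ioi (0:ℝ), -u'' r + V r * u r = E • u r)
    (hw : ∀ r, w r = u' r * (u r)⁻¹)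
    (hwd : ∀ r ∈ Ioi (0:ℝ), ∀ i j, HasDerivAt (fun t => w t i j) (wd r i j) r) :
    ∀ r ∈ Ioi (0:ℝ), wd r = V r - E • 1 - w r * w r := by
  have hwu : ∀ s ∈ Ioi (0:ℝ), w s * u s = u' s := by
    intro s hs
    rw [hw s, Matrix.mul_assoc,
      Matrix.nonsing_inv_mul _ ((Matrix.isUnit_iff_isUnit_det _).mp (hinv s hs)),
      Matrix.mul_one]
  intro r hr
  have key : u'' r = wd r * u r + w r * u' r := by
    ext i j
    refine HasDerivAt.unique (hu' r hr i j) ?_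
    have hd := entryMulDeriv w (wd r) u (u' r) r (hwd r hr) (hu r hr) i j
    refine hd.congr_of_eventuallyEq ?_
    filter_upwards [isOpen_Ioi.mem_nhds hr] with t ht
    rw [hwu t ht]
  have hu''v : u'' r = V r * u r - E • u r := by
    have h := heq r hr
    rw [← h]; abel
  have hu'v : u' r = w r * u r := (hwu r hr).symm
  have hcanc : wd r * u r = (V r - E • 1 - w r * w r) * u r := by
    have h1 : wd r * u r = u'' r - w r * u' r := by rw [key]; abel
    rw [h1, hu''v, hu'v]
    simp only [sub_mul, Matrix.smul_mul, Matrix.one_mul, ← Matrix.mul_assoc]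
  exact (hinv r hr).mul_right_cancel hcanc

lemma darboux_step {n : ℕ} (V w wd : ℝ → Matrix (Fin 2) (Fin 2) ℂ) (E k2 : ℂ)
    (hw : ∀ r ∈ Ioi (0:ℝ), ∀ i j, HasDerivAt (fun t => w t i j) (wd r i j) r)
    (hric : ∀ r ∈ Ioi (0:ℝ), wd r = V r - E • 1 - w r * w r)
    (ψ ψ' ψ'' : ℝ → Matrix (Fin 2) (Fin n) ℂ)
    (hψ : ∀ r ∈ Ioi (0:ℝ), ∀ i j, HasDerivAt (fun t => ψ t i j) (ψ' r i j) r)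
    (hψ' : ∀ r ∈ Ioi (0:ℝ), ∀ i j, HasDerivAt (fun t => ψ' t i j) (ψ'' r i j) r)
    (hψeq : ∀ r ∈ Ioi (0:ℝ), ψ'' r = V r * ψ r - k2 • ψ r)
    (G G' : ℝ → Matrix (Fin 2) (Fin n) ℂ)
    (hG : ∀ r, G r = w r * ψ r - ψ' r)
    (hG' : ∀ r ∈ Ioi (0:ℝ), G' r = (k2 - E) • ψ r - w r * G r) :
    ∀ r ∈ Ioi (0:ℝ),
      (∀ i j, HasDerivAt (fun t => G t i j) (G' r i j) r) ∧
      (∀ i j, HasDerivAt (fun t => G' t i j)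
        (((V r - (2:ℂ) • wd r) * G r - k2 • G r) i j) r) := by
  have part1 : ∀ r ∈ Ioi (0:ℝ), ∀ i j, HasDerivAt (fun t => G t i j) (G' r i j) r := by
    intro r hr i j
    have hd := (entryMulDeriv w (wd r) ψ (ψ' r) r (hw r hr) (hψ r hr) i j).fun_sub
      (hψ' r hr i j)
    have hval : wd r * ψ r + w r * ψ' r - ψ'' r = G' r := by
      rw [hG' r hr, hG r, hric r hr, hψeq r hr]
      simp only [Matrix.sub_mul, Matrix.smul_mul, Matrix.one_mul, Matrix.mul_sub, sub_smul,
        ← Matrix.mul_assoc]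
      module
    have heqf : (fun t => G t i j) = fun t => (w t * ψ t) i j - ψ' t i j := by
      funext t; rw [hG t]; simp [Matrix.sub_apply]
    rw [heqf]
    convert hd using 1
    case e'_4 => rfl
    rw [← hval]
    simp [Matrix.sub_apply, Matrix.add_apply]
  intro r hr
  refine ⟨part1 r hr, ?_⟩
  intro i j
  have h1 := part1 r hr
  have h2 : HasDerivAt (fun t => (w t * G t) i j) ((wd r * G r + w r * G' r) i j) r :=
    entryMulDeriv w (wd r) G (G' r) r (hw r hr) h1 i j
  have h3 : HasDerivAt (fun t => ((k2 - E) • ψ t) i j) (((k2 - E) • ψ' r) i j) r := by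
    simpa [Matrix.smul_apply, smul_eq_mul] using (hψ r hr i j).const_mul (k2 - E)
  have hF : HasDerivAt (fun t => ((k2 - E) • ψ t - w t * G t) i j)
      (((k2 - E) • ψ' r - (wd r * G r + w r * G' r)) i j) r := by
    simpa [Matrix.sub_apply] using h3.fun_sub h2
  have hval : (k2 - E) • ψ' r - (wd r * G r + w r * G' r)
      = (V r - (2:ℂ) • wd r) * G r - k2 • G r := by
    have hψ'v : ψ' r = w r * ψ r - G r := by rw [hG r]; abel
    rw [hG' r hr, hψ'v, hric r hr]
    simp only [Matrix.sub_mul, Matrix.add_mul, Matrix.mul_sub, Matrix.mul_add, Matrix.smul_mul,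
      Matrix.mul_smul, Matrix.one_mul, ← Matrix.mul_assoc, sub_smul, smul_sub]
    module
  rw [← hval]
  refine hF.congr_of_eventuallyEq ?_
  filter_upwards [isOpen_Ioi.mem_nhds hr] with t ht
  rw [hG' t ht]

/-- Second-order (two-fold) SUSY intertwining: if `-ψ'' + V₀ψ = k²ψ`, then
`φ = (w̃₂ - ∂)((w₁ - ∂)ψ)` satisfies `-φ'' + V₂φ = k²φ`, where the chain of two
first-order Darboux transformations goes through `V₁ = V₀ - 2w₁'` to
`V₂ = V₁ - 2w̃₂'`, with `w₁ = u₁'u₁⁻¹`, `ũ₂ = w₁u₂ - u₂'` and `w̃₂ = ũ₂'ũ₂⁻¹`. -/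
theorem secondOrder_SUSY_intertwining {n : ℕ}
    (V₀ u₁ u₁' u₁'' u₂ u₂' u₂'' : ℝ → Matrix (Fin 2) (Fin 2) ℂ) (E₁ E₂ : ℂ)
    (hV₀ : ContinuousOn V₀ (Ioi 0))
    (hu₁ : ∀ r ∈ Ioi (0:ℝ), ∀ i j, HasDerivAt (fun t => u₁ t i j) (u₁' r i j) r)
    (hu₁' : ∀ r ∈ Ioi (0:ℝ), ∀ i j, HasDerivAt (fun t => u₁' t i j) (u₁'' r i j) r)
    (hu₂ : ∀ r ∈ Ioi (0:ℝ), ∀ i j, HasDerivAt (fun t => u₂ t i j) (u₂' r i j) r)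
    (hu₂' : ∀ r ∈ Ioi (0:ℝ), ∀ i j, HasDerivAt (fun t => u₂' t i j) (u₂'' r i j) r)
    (hinv₁ : ∀ r ∈ Ioi (0:ℝ), IsUnit (u₁ r))
    (hinv₂ : ∀ r ∈ Ioi (0:ℝ), IsUnit (u₂ r))
    (heq₁ : ∀ r ∈ Ioi (0:ℝ), -u₁'' r + V₀ r * u₁ r = E₁ • u₁ r)
    (heq₂ : ∀ r ∈ Ioi (0:ℝ), -u₂'' r + V₀ r * u₂ r = E₂ • u₂ r)
    (w₁ w₁d V₁ : ℝ → Matrix (Fin 2) (Fin 2) ℂ)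
    (hw₁ : ∀ r, w₁ r = u₁' r * (u₁ r)⁻¹)
    (hw₁d : ∀ r ∈ Ioi (0:ℝ), ∀ i j, HasDerivAt (fun t => w₁ t i j) (w₁d r i j) r)
    (hV₁ : ∀ r, V₁ r = V₀ r - (2:ℂ) • w₁d r)
    (tu₂ tu₂' : ℝ → Matrix (Fin 2) (Fin 2) ℂ)
    (htu₂ : ∀ r, tu₂ r = w₁ r * u₂ r - u₂' r)
    (hinvt : ∀ r ∈ Ioi (0:ℝ), IsUnit (tu₂ r))
    (htu₂' : ∀ r ∈ Ioi (0:ℝ), ∀ i j, HasDerivAt (fun t => tu₂ t i j) (tu₂' r i j) r)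
    (tw₂ tw₂d V₂ : ℝ → Matrix (Fin 2) (Fin 2) ℂ)
    (htw₂ : ∀ r, tw₂ r = tu₂' r * (tu₂ r)⁻¹)
    (htw₂d : ∀ r ∈ Ioi (0:ℝ), ∀ i j, HasDerivAt (fun t => tw₂ t i j) (tw₂d r i j) r)
    (hV₂ : ∀ r, V₂ r = V₁ r - (2:ℂ) • tw₂d r)
    (k2 : ℂ) (ψ ψ' ψ'' : ℝ → Matrix (Fin 2) (Fin n) ℂ)
    (hψ : ∀ r ∈ Ioi (0:ℝ), ∀ i j, HasDerivAt (fun t => ψ t i j) (ψ' r i j) r)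
    (hψ' : ∀ r ∈ Ioi (0:ℝ), ∀ i j, HasDerivAt (fun t => ψ' t i j) (ψ'' r i j) r)
    (hψeq : ∀ r ∈ Ioi (0:ℝ), -ψ'' r + V₀ r * ψ r = k2 • ψ r)
    (g g' : ℝ → Matrix (Fin 2) (Fin n) ℂ)
    (hg : ∀ r, g r = w₁ r * ψ r - ψ' r)
    (hg' : ∀ r ∈ Ioi (0:ℝ), ∀ i j, HasDerivAt (fun t => g t i j) (g' r i j) r)
    (φ : ℝ → Matrix (Fin 2) (Fin n) ℂ)
    (hφ : ∀ r, φ r = tw₂ r * g r - g' r) :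
    ∀ r ∈ Ioi (0:ℝ),
      (∀ i j, DifferentiableAt ℝ (fun t => φ t i j) r) ∧
      (∀ i j, HasDerivAt (deriv (fun t => φ t i j))
        ((V₂ r * φ r - k2 • φ r) i j) r) := by
  -- Riccati equation for w₁
  have hric₁ : ∀ r ∈ Ioi (0:ℝ), w₁d r = V₀ r - E₁ • 1 - w₁ r * w₁ r :=
    riccati hu₁ hu₁' hinv₁ heq₁ hw₁ hw₁d
  have hψeq' : ∀ r ∈ Ioi (0:ℝ), ψ'' r = V₀ r * ψ r - k2 • ψ r := by
    intro r hr; have h := hψeq r hr; rw [← h]; abel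
  have hu₂eq' : ∀ r ∈ Ioi (0:ℝ), u₂'' r = V₀ r * u₂ r - E₂ • u₂ r := by
    intro r hr; have h := heq₂ r hr; rw [← h]; abel
  -- Stage A : identify g' on (0,∞)
  have hstepA0 := darboux_step V₀ w₁ w₁d E₁ k2 hw₁d hric₁ ψ ψ' ψ'' hψ hψ' hψeq'
    g (fun r => (k2 - E₁) • ψ r - w₁ r * g r) hg (fun r _ => rfl)
  have hg'val : ∀ r ∈ Ioi (0:ℝ), g' r = (k2 - E₁) • ψ r - w₁ r * g r := by
    intro r hr
    ext i j
    exact HasDerivAt.unique (hg' r hr i j) ((hstepA0 r hr).1 i j)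
  have hstepA := darboux_step V₀ w₁ w₁d E₁ k2 hw₁d hric₁ ψ ψ' ψ'' hψ hψ' hψeq'
    g g' hg hg'val
  have hg'' : ∀ r ∈ Ioi (0:ℝ), ∀ i j, HasDerivAt (fun t => g' t i j)
      ((V₁ r * g r - k2 • g r) i j) r := by
    intro r hr i j
    rw [hV₁ r]
    exact (hstepA r hr).2 i j
  -- Stage B : the transformed seed solution tu₂
  have hstepB0 := darboux_step V₀ w₁ w₁d E₁ E₂ hw₁d hric₁ u₂ u₂' u₂'' hu₂ hu₂' hu₂eq'
    tu₂ (fun r => (E₂ - E₁) • u₂ r - w₁ r * tu₂ r) htu₂ (fun r _ => rfl)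
  have htu₂'val : ∀ r ∈ Ioi (0:ℝ), tu₂' r = (E₂ - E₁) • u₂ r - w₁ r * tu₂ r := by
    intro r hr
    ext i j
    exact HasDerivAt.unique (htu₂' r hr i j) ((hstepB0 r hr).1 i j)
  have hstepB := darboux_step V₀ w₁ w₁d E₁ E₂ hw₁d hric₁ u₂ u₂' u₂'' hu₂ hu₂' hu₂eq'
    tu₂ tu₂' htu₂ htu₂'val
  have htu₂'' : ∀ r ∈ Ioi (0:ℝ), ∀ i j, HasDerivAt (fun t => tu₂' t i j)
      ((V₁ r * tu₂ r - E₂ • tu₂ r) i j) r := by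
    intro r hr i j
    rw [hV₁ r]
    exact (hstepB r hr).2 i j
  -- Riccati equation for tw₂
  have hric₂ : ∀ r ∈ Ioi (0:ℝ), tw₂d r = V₁ r - E₂ • 1 - tw₂ r * tw₂ r := by
    refine riccati (u'' := fun r => V₁ r * tu₂ r - E₂ • tu₂ r)
      htu₂' htu₂'' hinvt ?_ htw₂ htw₂d
    intro r hr
    module
  -- Stage C : the second Darboux transformation
  have hstepC := darboux_step V₁ tw₂ tw₂d E₂ k2 htw₂d hric₂ g g'
    (fun r => V₁ r * g r - k2 • g r) hg' hg'' (fun r _ => rfl)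
    φ (fun r => (k2 - E₂) • g r - tw₂ r * φ r) hφ (fun r _ => rfl)
  intro r hr
  constructor
  · intro i j
    exact ((hstepC r hr).1 i j).differentiableAt
  · intro i j
    have h2 := (hstepC r hr).2 i j
    have hval : (V₁ r - (2:ℂ) • tw₂d r) * φ r - k2 • φ r = V₂ r * φ r - k2 • φ r := by
      rw [hV₂ r]
    rw [hval] at h2
    refine h2.congr_of_eventuallyEq ?_
    filter_upwards [isOpen_Ioi.mem_nhds hr] with t ht
    exact ((hstepC t ht).1 i j).deriv
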